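/- arXiv:1709.09439 — 2 statements merged into one kernel-verified Lean document; each statement's English description precedes it below -/
import Mathlib

section
/- Let $N = U \oplus \langle 2n \rangle$, and identify $\Omega^+(N)$ with the upper half plane $\mathfrak{h}$ via $z \mapsto [-nz^2 : 1 : z]$. A point $z \in \mathfrak{h}$ is orthogonal to some $\delta \in N$ with $\delta^2 = -2$ (i.e. lies in the set removed to form $\Omega_0^+(N)$) if and only if $z = \frac{c}{b} + \frac{i}{b\sqrt{n}}$ for some $c \in \mathbb{Z}$ and $b \in \mathbb{Z}_{>0}$ with $b \mid nc^2 + 1$. -/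
section OrthAux

private lemma orth_fwd_aux (n : ℕ) (hn : 0 < n) (z : ℂ) (hz : 0 < z.im) (a b c : ℤ) (hb : 0 < b)
    (h1 : a * b + (n : ℤ) * c ^ 2 = -1)
    (h2 : -(n : ℂ) * z ^ 2 * (b : ℂ) + (a : ℂ) + 2 * (n : ℂ) * (c : ℂ) * z = 0) :
    b ∣ ((n : ℤ) * c ^ 2 + 1) ∧
      z = (c : ℂ) / (b : ℂ) + Complex.I / ((b : ℂ) * (Real.sqrt n : ℝ)) := by
  have hn' : (0:ℝ) < n := by exact_mod_cast hn
  have hb' : (0:ℝ) < (b:ℝ) := by exact_mod_cast hb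
  have h2re := congrArg Complex.re h2
  have h2im := congrArg Complex.im h2
  simp [pow_two, Complex.mul_re, Complex.mul_im, Complex.add_re, Complex.add_im] at h2re h2im
  -- h2im : -(n*(x*y + y*x)*b) + 2*n*c*y = 0
  have hc : (c:ℝ) = (b:ℝ) * z.re := by
    have h : ((c:ℝ) - (b:ℝ)*z.re) * (2*(n:ℝ)*z.im) = 0 := by linear_combination h2im
    rcases mul_eq_zero.mp h with h | h
    · linarith
    · nlinarith
  have ha : (a:ℝ) = -(n:ℝ)*(b:ℝ)*(z.re^2 + z.im^2) := by
    linear_combination h2re - 2*(n:ℝ)*z.re*hc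
  have h1' : (a:ℝ)*(b:ℝ) + (n:ℝ)*(c:ℝ)^2 = -1 := by exact_mod_cast h1
  have hy2 : (n:ℝ)*(b:ℝ)^2*z.im^2 = 1 := by
    linear_combination -h1' + (b:ℝ)*ha + (n:ℝ)*((c:ℝ) + (b:ℝ)*z.re)*hc
  have hs : (0:ℝ) < Real.sqrt n := Real.sqrt_pos.mpr hn'
  have hsq : (Real.sqrt n)^2 = (n:ℝ) := Real.sq_sqrt hn'.le
  refine ⟨⟨-a, by linarith⟩, ?_⟩
  have h3 : (b:ℝ) * Real.sqrt n * z.im = 1 := by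
    have hsq1 : ((b:ℝ) * Real.sqrt n * z.im) * ((b:ℝ) * Real.sqrt n * z.im) = 1 := by
      linear_combination (b:ℝ)^2*z.im^2*hsq + hy2
    rcases mul_self_eq_one_iff.mp hsq1 with h | h
    · exact h
    · nlinarith [mul_pos (mul_pos hb' hs) hz]
  have hbC : ((b:ℤ):ℂ) ≠ 0 := by exact_mod_cast hb.ne'
  have hsC : ((Real.sqrt n : ℝ):ℂ) ≠ 0 := by
    simp only [ne_eq, Complex.ofReal_eq_zero]; positivity
  have hre : z.re = (c:ℝ)/(b:ℝ) := by
    field_simp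
    linear_combination -hc
  have him : z.im = 1/((b:ℝ)*Real.sqrt n) := by
    rw [eq_div_iff (by positivity)]
    linear_combination h3
  rw [show ((c:ℂ)/(b:ℂ) + Complex.I/((b:ℂ)*((Real.sqrt n : ℝ):ℂ))) =
      Complex.ofReal ((c:ℝ)/(b:ℝ)) + Complex.ofReal (1/((b:ℝ)*Real.sqrt n)) * Complex.I from by
    push_cast; ring]
  apply Complex.ext <;>
    simp [hre, him]
  left
  rw [← hsq]
  field_simp
  rw [Real.sqrt_sq hs.le]

end OrthAux

/-- `N = U ⊕ ⟨2n⟩` with pairing `((a₁,b₁,c₁),(a₂,b₂,c₂)) = a₁b₂ + a₂b₁ + 2n c₁c₂`;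
the point `z` of the upper half plane corresponds to the line spanned by
`Ω_z = (-nz², 1, z)`. A `(-2)`-class is `δ = (a,b,c) ∈ ℤ³` with
`2ab + 2nc² = -2`, i.e. `ab + nc² = -1`; orthogonality to `δ` means
`(Ω_z, δ) = -nz²·b + a + 2nz·c = 0`.

Claim: `z ∈ 𝔥` is orthogonal to some `(-2)`-class of `N` if and only if
`z = c/b + i/(b√n)` with `c ∈ ℤ`, `b ∈ ℤ_{>0}`, `b ∣ nc² + 1`. -/
theorem orthogonal_to_minus_two_class_iff (n : ℕ) (hn : 0 < n)
    (z : ℂ) (hz : 0 < z.im) :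
    (∃ a b c : ℤ, a * b + (n : ℤ) * c ^ 2 = -1 ∧
        -(n : ℂ) * z ^ 2 * (b : ℂ) + (a : ℂ) + 2 * (n : ℂ) * (c : ℂ) * z = 0) ↔
    (∃ c b : ℤ, 0 < b ∧ b ∣ ((n : ℤ) * c ^ 2 + 1) ∧
        z = (c : ℂ) / (b : ℂ) + Complex.I / ((b : ℂ) * (Real.sqrt n : ℝ))) := by
  constructor
  · rintro ⟨a, b, c, h1, h2⟩
    have hbne : b ≠ 0 := by
      rintro rfl
      have h2im := congrArg Complex.im h2
      simp [Complex.mul_im, Complex.add_im] at h2im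
      have hc0' : c = 0 := by
        rcases h2im with (h | h) | h
        · exact absurd h hn.ne'
        · exact h
        · exact absurd h hz.ne'
      subst hc0'
      have h2re := congrArg Complex.re h2
      simp at h2re
      rw [h2re] at h1
      simp at h1
    rcases hbne.lt_or_gt with hb | hb
    · have h1' : (-a) * (-b) + (n : ℤ) * (-c) ^ 2 = -1 := by ring_nf; linear_combination h1
      have h2' : -(n : ℂ) * z ^ 2 * ((-b : ℤ) : ℂ) + ((-a : ℤ) : ℂ)
          + 2 * (n : ℂ) * ((-c : ℤ) : ℂ) * z = 0 := by
        push_cast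
        linear_combination -h2
      obtain ⟨hdvd, hzeq⟩ := orth_fwd_aux n hn z hz (-a) (-b) (-c) (by omega) h1' h2'
      exact ⟨-c, -b, by omega, hdvd, hzeq⟩
    · obtain ⟨hdvd, hzeq⟩ := orth_fwd_aux n hn z hz a b c hb h1 h2
      exact ⟨c, b, hb, hdvd, hzeq⟩
  · rintro ⟨c, b, hb, ⟨k, hk⟩, rfl⟩
    refine ⟨-k, b, c, by linear_combination hk, ?_⟩
    have hs2 : ((Real.sqrt n : ℝ):ℂ)^2 = (n:ℂ) := by
      norm_cast
      exact_mod_cast Real.sq_sqrt (Nat.cast_nonneg n)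
    have hbne : ((b:ℤ):ℂ) ≠ 0 := by exact_mod_cast hb.ne'
    have hsne : ((Real.sqrt n : ℝ):ℂ) ≠ 0 := by
      simp only [ne_eq, Complex.ofReal_eq_zero]
      positivity
    have hkC : (n:ℂ)*(c:ℂ)^2+1 = (b:ℂ)*(k:ℂ) := by exact_mod_cast hk
    push_cast
    field_simp
    ring_nf
    linear_combination ((Real.sqrt n:ℝ):ℂ)^2*hkC - (n:ℂ)*Complex.I_sq - hs2
end

section
/- The set $\{\frac{c}{b} + \frac{i}{b\sqrt{n}} : c \in \mathbb{Z}, b \in \mathbb{Z}_{>0}, b \mid nc^2 + 1\}$ is an infinite, closed, discrete subset of the upper half plane $\mathfrak{h}$, for any positive integer $n$. -/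
/-- The set `{c/b + i/(b√n) : c ∈ ℤ, b ∈ ℤ_{>0}, b ∣ nc² + 1}` in the upper half
plane. -/
def specialPoints (n : ℕ) : Set ℂ :=
  {z | ∃ c b : ℤ, 0 < b ∧ b ∣ ((n : ℤ) * c ^ 2 + 1) ∧
    z = (c : ℂ) / (b : ℂ) + Complex.I / ((b : ℂ) * (Real.sqrt n : ℝ))}

lemma sp_im (c b : ℤ) (r : ℝ) :
    ((c : ℂ)/b + Complex.I/((b:ℂ)*(r : ℝ))).im = 1/(b * r) := by
  have h : ((b:ℂ)*(r:ℝ)) = (((b:ℝ) * r : ℝ) : ℂ) := by push_cast; ring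
  have h2 : ((c:ℂ)/b) = (((c:ℝ)/b : ℝ) : ℂ) := by push_cast; ring
  rw [h, h2, Complex.add_im, Complex.div_ofReal_im, Complex.ofReal_im, Complex.I_im]
  simp

lemma sp_re (c b : ℤ) (r : ℝ) :
    ((c : ℂ)/b + Complex.I/((b:ℂ)*(r : ℝ))).re = c / b := by
  have h : ((b:ℂ)*(r:ℝ)) = (((b:ℝ) * r : ℝ) : ℂ) := by push_cast; ring
  have h2 : ((c:ℂ)/b) = (((c:ℝ)/b : ℝ) : ℂ) := by push_cast; ring
  rw [h, h2, Complex.add_re, Complex.div_ofReal_re, Complex.ofReal_re, Complex.I_re]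
  simp

lemma sp_finite (n : ℕ) (hn : 0 < n) (w : ℂ) (hw : 0 < w.im) :
    (specialPoints n ∩ Metric.closedBall w (w.im/2)).Finite := by
  set s : ℝ := Real.sqrt n with hsdef
  have hs : 0 < s := Real.sqrt_pos.2 (by exact_mod_cast hn)
  set B : ℤ := ⌈2/(w.im * s)⌉ with hB
  set R : ℝ := |w.re| + w.im/2 with hR
  have hR0 : 0 < R := by positivity
  set C : ℤ := ⌈(B:ℝ) * R⌉ with hC
  apply Set.Finite.subset
    ((Set.finite_Icc ((-C, 1) : ℤ × ℤ) (C, B)).image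
      (fun p : ℤ × ℤ => (p.1 : ℂ)/p.2 + Complex.I/((p.2:ℂ)*(s : ℝ))))
  rintro z ⟨⟨c, b, hb, -, rfl⟩, hz⟩
  have hb' : (0:ℝ) < (b:ℝ) := by exact_mod_cast hb
  have hbs : (0:ℝ) < (b:ℝ) * s := mul_pos hb' hs
  rw [Metric.mem_closedBall, Complex.dist_eq] at hz
  have him : |((c : ℂ)/b + Complex.I/((b:ℂ)*(s : ℝ)) - w).im| ≤ w.im/2 :=
    le_trans (Complex.abs_im_le_norm _) hz
  have hre : |((c : ℂ)/b + Complex.I/((b:ℂ)*(s : ℝ)) - w).re| ≤ w.im/2 :=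
    le_trans (Complex.abs_re_le_norm _) hz
  rw [Complex.sub_im, sp_im] at him
  rw [Complex.sub_re, sp_re] at hre
  have him1 : w.im/2 ≤ 1/((b:ℝ)*s) := by
    have := abs_le.1 him
    linarith [this.1]
  -- b ≤ B
  have hbB : (b:ℝ) ≤ 2/(w.im * s) := by
    rw [le_div_iff₀ (mul_pos hw hs)]
    rw [le_div_iff₀ hbs] at him1
    nlinarith
  have hbB' : b ≤ B := by
    have := le_trans hbB (Int.le_ceil _)
    exact_mod_cast this
  -- |c| ≤ C
  have hcb : |(c:ℝ)/b| ≤ R := by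
    have := abs_le.1 hre
    rw [hR]
    cases abs_cases ((c:ℝ)/b) with
    | inl h => rw [h.1]; cases abs_cases w.re with
      | inl h2 => linarith [this.2]
      | inr h2 => linarith [this.2]
    | inr h => rw [h.1]; cases abs_cases w.re with
      | inl h2 => linarith [this.1]
      | inr h2 => linarith [this.1]
  have hcC : |(c:ℝ)| ≤ (C:ℝ) := by
    have h1 : |(c:ℝ)| ≤ (b:ℝ) * R := by
      rw [abs_div, abs_of_pos hb', div_le_iff₀ hb'] at hcb
      linarith [hcb, mul_comm R (b:ℝ)]
    have h2 : (b:ℝ) * R ≤ (B:ℝ) * R :=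
      mul_le_mul_of_nonneg_right (by exact_mod_cast hbB') hR0.le
    exact le_trans (le_trans h1 h2) (Int.le_ceil _)
  have hcC' : -C ≤ c ∧ c ≤ C := by
    have := abs_le.1 hcC
    constructor <;> [exact_mod_cast this.1; exact_mod_cast this.2]
  exact ⟨(c, b), Set.mem_Icc.2 ⟨⟨hcC'.1, hb⟩, ⟨hcC'.2, hbB'⟩⟩, rfl⟩

/-- For any positive integer `n`, the set
`{c/b + i/(b√n) : c ∈ ℤ, b ∈ ℤ_{>0}, b ∣ nc² + 1}` is an infinite subset of the
upper half plane `𝔥`, closed in `𝔥` (with the subspace topology from `ℂ`), and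
discrete. -/
theorem specialPoints_infinite_closed_discrete (n : ℕ) (hn : 0 < n) :
    (specialPoints n).Infinite ∧
    (∀ z ∈ specialPoints n, 0 < z.im) ∧
    IsClosed ((fun w : {z : ℂ // 0 < z.im} => (w : ℂ)) ⁻¹' specialPoints n) ∧
    DiscreteTopology ↥(specialPoints n) := by
  have hs : 0 < Real.sqrt n := Real.sqrt_pos.2 (by exact_mod_cast hn)
  have him : ∀ z ∈ specialPoints n, 0 < z.im := by
    rintro z ⟨c, b, hb, -, rfl⟩
    rw [sp_im]
    have hb' : (0:ℝ) < (b:ℝ) := by exact_mod_cast hb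
    positivity
  refine ⟨?_, him, ?_, ?_⟩
  · apply Set.infinite_of_injective_forall_mem
      (f := fun c : ℤ => (c : ℂ) / ((1:ℤ) : ℂ) + Complex.I / (((1:ℤ) : ℂ) * (Real.sqrt n : ℝ)))
    · intro a b hab
      have := congrArg Complex.re hab
      rw [sp_re, sp_re] at this
      have : (a:ℝ) = (b:ℝ) := by
        field_simp at this; exact_mod_cast this
      exact_mod_cast this
    · intro c
      exact ⟨c, 1, one_pos, one_dvd _, by push_cast; ring⟩
  · rw [← closure_subset_iff_isClosed]
    intro x hx
    rw [closure_subtype] at hx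
    set r : ℝ := (x:ℂ).im / 2 with hr
    have hr0 : 0 < r := half_pos x.2
    have himg : (Subtype.val '' ((fun w : {z : ℂ // 0 < z.im} => (w : ℂ)) ⁻¹' specialPoints n))
        ⊆ (specialPoints n ∩ Metric.closedBall (x:ℂ) r) ∪
          (specialPoints n ∩ (Metric.ball (x:ℂ) r)ᶜ) := by
      rintro y ⟨u, hu, rfl⟩
      by_cases h : (u:ℂ) ∈ Metric.closedBall (x:ℂ) r
      · exact Or.inl ⟨hu, h⟩
      · exact Or.inr ⟨hu, fun hy => h (Metric.ball_subset_closedBall hy)⟩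
    have := (closure_mono himg) hx
    rw [closure_union] at this
    rcases this with h | h
    · rw [hr, (sp_finite n hn (x:ℂ) x.2).isClosed.closure_eq] at h
      exact h.1
    · have hcl : IsClosed ((Metric.ball (x:ℂ) r)ᶜ) := Metric.isOpen_ball.isClosed_compl
      have := (closure_mono (Set.inter_subset_right)) h
      rw [hcl.closure_eq] at this
      exact absurd (Metric.mem_ball_self hr0) this
  · rw [discreteTopology_subtype_iff]
    intro x hx
    have hx' : 0 < x.im := him x hx
    set r : ℝ := x.im / 2 with hr
    have hr0 : 0 < r := half_pos hx'
    have hF : (specialPoints n ∩ Metric.closedBall x r).Finite := sp_finite n hn x hx'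
    rw [nhdsWithin, inf_assoc, Filter.inf_principal, Filter.inf_principal_eq_bot]
    -- nbhd: complement of (F \ {x}) intersect ball
    have hclosed : IsClosed ((specialPoints n ∩ Metric.closedBall x r) \ {x}) :=
      hF.diff.isClosed
    have hxnot : x ∉ (specialPoints n ∩ Metric.closedBall x r) \ {x} := fun h => h.2 rfl
    have hmem : ((specialPoints n ∩ Metric.closedBall x r) \ {x})ᶜ ∈ nhds x :=
      hclosed.isOpen_compl.mem_nhds hxnot
    have hball : Metric.ball x r ∈ nhds x := Metric.ball_mem_nhds x hr0
    filter_upwards [hmem, hball] with y hy hyb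
    rintro ⟨hy1, hy2⟩
    exact hy ⟨⟨hy2, Metric.ball_subset_closedBall hyb⟩, hy1⟩
end
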